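/- For every integer ℓ ≥ 9 there exist x₁, x₂, x₃ ∈ Sym(ℓ) such that x₁·x₂·x₃ = 1, the subgroup generated by x₁, x₂, x₃ contains Alt(ℓ), x₁ and x₂ are ℓ-cycles, and x₃ is a 3-cycle. -/

import Mathlib

open Equiv Equiv.Perm Subgroup Finset

private theorem swap_anchor {α : Type*} [DecidableEq α] {a b c : α}
    (hab : a ≠ b) (hac : a ≠ c) (hbc : b ≠ c) :
    Equiv.swap a b * Equiv.swap a c = Equiv.swap c a * Equiv.swap c b := by
  have hba := hab.symm
  have hca := hac.symm
  have hcb := hbc.symm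
  ext y
  by_cases h1 : y = a <;> by_cases h2 : y = b <;> by_cases h3 : y = c <;>
    simp_all [Equiv.swap_apply_def, Equiv.Perm.mul_apply] <;> tauto

private theorem swap_anchor' {α : Type*} [DecidableEq α] {a b c : α}
    (hab : a ≠ b) (hac : a ≠ c) (hbc : b ≠ c) :
    Equiv.swap a b * Equiv.swap a c = Equiv.swap b c * Equiv.swap b a := by
  have hba := hab.symm
  have hca := hac.symm
  have hcb := hbc.symm
  ext y
  by_cases h1 : y = a <;> by_cases h2 : y = b <;> by_cases h3 : y = c <;>
    simp_all [Equiv.swap_apply_def, Equiv.Perm.mul_apply] <;> tauto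

private theorem swap_four {α : Type*} [DecidableEq α] {a b c x : α}
    (hab : a ≠ b) (hac : a ≠ c) (hbc : b ≠ c)
    (hax : a ≠ x) (hbx : b ≠ x) (hcx : c ≠ x) :
    Equiv.swap a b * Equiv.swap a c =
      (Equiv.swap x a * Equiv.swap x b) * (Equiv.swap x c * Equiv.swap x a) := by
  have hba := hab.symm
  have hca := hac.symm
  have hcb := hbc.symm
  have hxa := hax.symm
  have hxb := hbx.symm
  have hxc := hcx.symm
  ext y
  by_cases h1 : y = a <;> by_cases h2 : y = b <;> by_cases h3 : y = c <;>
    by_cases h4 : y = x <;>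
    simp_all [Equiv.swap_apply_def, Equiv.Perm.mul_apply] <;> tauto

private theorem conj_swap_pair {α : Type*} [DecidableEq α] (f : Equiv.Perm α) (a b c : α) :
    Equiv.swap (f a) (f b) * Equiv.swap (f a) (f c)
      = f * (Equiv.swap a b * Equiv.swap a c) * f⁻¹ := by
  rw [Equiv.swap_apply_apply, Equiv.swap_apply_apply]
  group

theorem alt_le_closure_cycle_threeCycle {α : Type*} [DecidableEq α] [Fintype α] {σ : Perm α}
    (h1 : IsCycle σ) (h2 : σ.support = Finset.univ) (h5 : 5 ≤ Fintype.card α) (x : α) :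
    alternatingGroup α ≤
      Subgroup.closure {σ, Equiv.swap x (σ x) * Equiv.swap x ((σ ^ 2) x)} := by
  set N := Fintype.card α with hN
  set H := Subgroup.closure {σ, Equiv.swap x (σ x) * Equiv.swap x ((σ ^ 2) x)} with hH
  have hσ : σ ∈ H := subset_closure (Set.mem_insert _ _)
  have hτ : Equiv.swap x (σ x) * Equiv.swap x ((σ ^ 2) x) ∈ H :=
    subset_closure (Set.mem_insert_of_mem _ rfl)
  have hord : orderOf σ = N := by rw [h1.orderOf, h2, Finset.card_univ]
  have hσN : σ ^ N = 1 := by rw [← hord]; exact pow_orderOf_eq_one σ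
  have hxfix : ∀ k : ℕ, (σ ^ k) x = x ↔ N ∣ k := by
    intro k
    constructor
    · intro h
      by_contra hd
      have hs : support (σ ^ k) = support σ := h1.support_pow_eq_iff.2 (by rwa [hord])
      have hx : x ∈ support (σ ^ k) := by rw [hs, h2]; exact Finset.mem_univ x
      exact (mem_support.mp hx) h
    · intro h
      rw [← hord] at h
      rw [orderOf_dvd_iff_pow_eq_one.mp h, Equiv.Perm.one_apply]
  have hNpos : 0 < N := by omega
  have hinj : ∀ i j : ℕ, i < N → j < N → (σ ^ i) x = (σ ^ j) x → i = j := by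
    have key : ∀ i j : ℕ, i ≤ j → j < N → (σ ^ i) x = (σ ^ j) x → i = j := by
      intro i j hij hj h
      have hx : (σ ^ (j - i)) x = x := by
        apply (σ ^ i).injective
        rw [← Equiv.Perm.mul_apply, ← pow_add, Nat.add_sub_cancel' hij]
        exact h.symm
      have hd := (hxfix _).1 hx
      rcases Nat.eq_zero_or_pos (j - i) with h0 | h0
      · omega
      · have := Nat.le_of_dvd h0 hd
        omega
    intro i j hi hj h
    rcases le_total i j with hij | hij
    · exact key i j hij hj h
    · exact (key j i hij hi h.symm).symm
  have hne : ∀ i j : ℕ, i < N → j < N → i ≠ j → (σ ^ i) x ≠ (σ ^ j) x := by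
    intro i j hi hj hij h
    exact hij (hinj i j hi hj h)
  have hpow1 : σ x = (σ ^ 1) x := by rw [pow_one]
  have hpow0 : x = (σ ^ 0) x := by rw [pow_zero]; rfl
  -- conjugates of the generating 3-cycle
  have conjmem : ∀ k : ℕ,
      Equiv.swap ((σ ^ k) x) ((σ ^ (k + 1)) x) * Equiv.swap ((σ ^ k) x) ((σ ^ (k + 2)) x)
        ∈ H := by
    intro k
    have e1 : (σ ^ (k + 1)) x = (σ ^ k) (σ x) := by
      rw [pow_succ, Equiv.Perm.mul_apply]
    have e2 : (σ ^ (k + 2)) x = (σ ^ k) ((σ ^ 2) x) := by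
      rw [pow_add, Equiv.Perm.mul_apply]
    rw [e1, e2, conj_swap_pair]
    exact H.mul_mem (H.mul_mem (H.pow_mem hσ k) hτ) (H.inv_mem (H.pow_mem hσ k))
  -- anchored pairs
  have stepA : ∀ m : ℕ, 2 ≤ m → m < N →
      Equiv.swap x (σ x) * Equiv.swap x ((σ ^ m) x) ∈ H := by
    intro m
    induction m using Nat.strong_induction_on with
    | _ m ih =>
      intro h2m hmN
      rcases eq_or_lt_of_le h2m with h | h3m
      · rw [← h]
        exact hτ
      · rcases eq_or_lt_of_le (Nat.succ_le_of_lt hmN) with hwrap | hmid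
        · -- m = N - 1 : wraparound case
          have c := conjmem m
          rw [show m + 1 = N from hwrap] at c
          have e1 : (σ ^ N) x = x := by rw [hσN]; rfl
          have e2 : (σ ^ (m + 2)) x = σ x := by
            have : m + 2 = N + 1 := by omega
            rw [this, pow_succ, Equiv.Perm.mul_apply, hσN]
            simp
          rw [e1, e2] at c
          have hwx : (σ ^ m) x ≠ x := by
            simpa using hne m 0 hmN hNpos (by omega)
          have hwsx : (σ ^ m) x ≠ σ x := by
            simpa using hne m 1 hmN (by omega) (by omega)
          have hxsx : x ≠ σ x := by
            simpa using hne 0 1 hNpos (by omega) (by omega)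
          rwa [swap_anchor' hwx hwsx hxsx] at c
        · -- 3 ≤ m, m + 1 < N : conjugation step
          have hs := ih (m - 1) (by omega) (by omega) (by omega)
          have c := conjmem (m - 1)
          have e1 : m - 1 + 1 = m := by omega
          have e2 : m - 1 + 2 = m + 1 := by omega
          rw [e1, e2] at c
          set p := (σ ^ (m - 1)) x with hp
          set q := (σ ^ m) x with hq
          set r := (σ ^ (m + 1)) x with hr
          set d := Equiv.swap p r * Equiv.swap p q with hd
          have hdH : d ∈ H := by
            have : d = (Equiv.swap p q * Equiv.swap p r)⁻¹ := by
              rw [mul_inv_rev, swap_inv, swap_inv]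
            rw [this]
            exact H.inv_mem c
          -- distinctness
          have hxp : x ≠ p := by simpa using hne 0 (m - 1) hNpos (by omega) (by omega)
          have hxq : x ≠ q := by simpa using hne 0 m hNpos (by omega) (by omega)
          have hxr : x ≠ r := by simpa using hne 0 (m + 1) hNpos (by omega) (by omega)
          have hsp : σ x ≠ p := by simpa using hne 1 (m - 1) (by omega) (by omega) (by omega)
          have hsq : σ x ≠ q := by simpa using hne 1 m (by omega) (by omega) (by omega)
          have hsr : σ x ≠ r := by simpa using hne 1 (m + 1) (by omega) (by omega) (by omega)
          have hqp : q ≠ p := by simpa using hne m (m - 1) (by omega) (by omega) (by omega)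
          have hqr : q ≠ r := by simpa using hne m (m + 1) (by omega) (by omega) (by omega)
          have hdx : d x = x := by
            rw [hd, Equiv.Perm.mul_apply, Equiv.swap_apply_of_ne_of_ne hxp hxq,
              Equiv.swap_apply_of_ne_of_ne hxp hxr]
          have hdsx : d (σ x) = σ x := by
            rw [hd, Equiv.Perm.mul_apply, Equiv.swap_apply_of_ne_of_ne hsp hsq,
              Equiv.swap_apply_of_ne_of_ne hsp hsr]
          have hdp : d p = q := by
            rw [hd, Equiv.Perm.mul_apply, Equiv.swap_apply_left,
              Equiv.swap_apply_of_ne_of_ne hqp hqr]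
          have key := conj_swap_pair d x (σ x) p
          rw [hdx, hdsx, hdp] at key
          rw [key]
          exact H.mul_mem (H.mul_mem hdH hs) (H.inv_mem hdH)
  -- anchored pairs for arbitrary second point
  have stepB : ∀ y : α, y ≠ x → Equiv.swap x (σ x) * Equiv.swap x y ∈ H := by
    intro y hy
    have hxs : σ x ≠ x := mem_support.mp (by rw [h2]; exact Finset.mem_univ x)
    have hys : σ y ≠ y := mem_support.mp (by rw [h2]; exact Finset.mem_univ y)
    obtain ⟨k, hk⟩ := h1.exists_pow_eq hxs hys
    have hk' : (σ ^ (k % N)) x = y := by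
      rw [← hord, pow_mod_orderOf]
      exact hk
    have hkN : k % N < N := Nat.mod_lt _ hNpos
    rcases Nat.eq_zero_or_pos (k % N) with h0 | h0
    · exfalso
      rw [h0, pow_zero, Equiv.Perm.one_apply] at hk'
      exact hy hk'.symm
    · rcases eq_or_lt_of_le (show 1 ≤ k % N from h0) with h1' | h1'
      · rw [← hk', ← h1', pow_one, Equiv.swap_mul_self]
        exact H.one_mem
      · rw [← hk']
        exact stepA (k % N) (by omega) hkN
  -- pairs of anchored swaps
  have stepC : ∀ a b : α, a ≠ x → b ≠ x → Equiv.swap x a * Equiv.swap x b ∈ H := by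
    intro a b ha hb
    have h := H.mul_mem (H.inv_mem (stepB a ha)) (stepB b hb)
    have e : (Equiv.swap x (σ x) * Equiv.swap x a)⁻¹ * (Equiv.swap x (σ x) * Equiv.swap x b)
        = Equiv.swap x a * Equiv.swap x b := by
      rw [mul_inv_rev, swap_inv, swap_inv, mul_assoc, Equiv.swap_mul_self_mul]
    rwa [e] at h
  -- all products of two swaps sharing a point
  have pairmem : ∀ a b c : α, a ≠ b → a ≠ c → b ≠ c →
      Equiv.swap a b * Equiv.swap a c ∈ H := by
    intro a b c hab hac hbc
    by_cases hax : a = x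
    · subst hax
      exact stepC b c hab.symm hac.symm
    · by_cases hbx : b = x
      · subst hbx
        rw [swap_anchor' hab hac hbc]
        exact stepC c a hbc.symm hax
      · by_cases hcx : c = x
        · subst hcx
          rw [swap_anchor hab hac hbc]
          exact stepC a b hax hbx
        · rw [swap_four hab hac hbc hax hbx hcx]
          exact H.mul_mem (stepC a b hax hbx) (stepC c a hcx hax)
  -- every 3-cycle lies in H
  have stepD : ∀ g : Perm α, g.IsThreeCycle → g ∈ H := by
    have hx1 : x ≠ σ x := by
      simpa using hne 0 1 hNpos (by omega) (by omega)
    have hx2 : x ≠ (σ ^ 2) x := by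
      simpa using hne 0 2 hNpos (by omega) (by omega)
    have h12 : σ x ≠ (σ ^ 2) x := by
      simpa using hne 1 2 (by omega) (by omega) (by omega)
    have τ3 : IsThreeCycle (Equiv.swap x (σ x) * Equiv.swap x ((σ ^ 2) x)) :=
      isThreeCycle_swap_mul_swap_same hx1 hx2 h12
    intro g hg
    have hconj : IsConj (Equiv.swap x (σ x) * Equiv.swap x ((σ ^ 2) x)) g :=
      isConj_iff_cycleType_eq.2 (τ3.trans hg.symm)
    obtain ⟨π, hπ⟩ := isConj_iff.1 hconj
    rw [← hπ, ← conj_swap_pair]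
    exact pairmem _ _ _ (π.injective.ne hx1) (π.injective.ne hx2) (π.injective.ne h12)
  rw [← closure_three_cycles_eq_alternating]
  exact (Subgroup.closure_le _).2 fun g hg => stepD g hg

private def A0 (m : ℕ) : Fin (m + 9) := ⟨0, by omega⟩
private def A1 (m : ℕ) : Fin (m + 9) := ⟨1, by omega⟩
private def A2 (m : ℕ) : Fin (m + 9) := ⟨2, by omega⟩
private def X1 (m : ℕ) : Equiv.Perm (Fin (m + 9)) := finRotate (m + 9)
private def X3 (m : ℕ) : Equiv.Perm (Fin (m + 9)) :=
  Equiv.swap (A0 m) (A2 m) * Equiv.swap (A0 m) (A1 m)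
private def X2 (m : ℕ) : Equiv.Perm (Fin (m + 9)) := (X1 m)⁻¹ * (X3 m)⁻¹

/-- **Lemma 9.2, case I1A.1**: for every `ℓ ≥ 9` there is a product-one triple
`x₁·x₂·x₃ = 1` in `Sym(ℓ)` generating a subgroup containing `Alt(ℓ)`, where `x₁, x₂`
are `ℓ`-cycles and `x₃` is a `3`-cycle. -/
theorem statement11 (ℓ : ℕ) (hℓ : 9 ≤ ℓ) :
    ∃ x₁ x₂ x₃ : Equiv.Perm (Fin ℓ),
      x₁ * x₂ * x₃ = 1 ∧
      alternatingGroup (Fin ℓ) ≤ Subgroup.closure {x₁, x₂, x₃} ∧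
      x₁.cycleType = {ℓ} ∧ x₂.cycleType = {ℓ} ∧ x₃.cycleType = {3} := by
  obtain ⟨m, rfl⟩ : ∃ m, ℓ = m + 9 := ⟨ℓ - 9, by omega⟩
  have h01 : A0 m ≠ A1 m := by apply Fin.ne_of_val_ne; show (0 : ℕ) ≠ 1; omega
  have h02 : A0 m ≠ A2 m := by apply Fin.ne_of_val_ne; show (0 : ℕ) ≠ 2; omega
  have h12 : A1 m ≠ A2 m := by apply Fin.ne_of_val_ne; show (1 : ℕ) ≠ 2; omega
  have hR : ∀ i : Fin (m + 9), X1 m i = i + 1 := fun i =>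
    finRotate_succ_apply (n := m + 8) i
  have hone : (1 : Fin (m + 9)).val = 1 := by
    rw [Fin.val_one']
    exact Nat.mod_eq_of_lt (by omega)
  have hr1 : ∀ (v : ℕ) (h : v + 1 < m + 9), X1 m ⟨v, by omega⟩ = ⟨v + 1, h⟩ := by
    intro v h
    apply Fin.ext
    rw [hR, Fin.val_add, hone]
    show (v + 1) % (m + 9) = v + 1
    exact Nat.mod_eq_of_lt h
  have r01 : X1 m (A0 m) = A1 m := hr1 0 (by omega)
  have r12 : X1 m (A1 m) = A2 m := hr1 1 (by omega)
  have rlast : X1 m ⟨m + 8, by omega⟩ = A0 m := by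
    apply Fin.ext
    rw [hR, Fin.val_add, hone]
    show (m + 8 + 1) % (m + 9) = 0
    rw [show m + 8 + 1 = m + 9 from by omega]
    exact Nat.mod_self _
  have hx3inv : (X3 m)⁻¹ = Equiv.swap (A0 m) (A1 m) * Equiv.swap (A0 m) (A2 m) := by
    show (Equiv.swap (A0 m) (A2 m) * Equiv.swap (A0 m) (A1 m))⁻¹ = _
    rw [mul_inv_rev, Equiv.swap_inv, Equiv.swap_inv]
  have h30 : (X3 m)⁻¹ (A0 m) = A2 m := by
    rw [hx3inv, Equiv.Perm.mul_apply, Equiv.swap_apply_left,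
      Equiv.swap_apply_of_ne_of_ne h02.symm h12.symm]
  have h31 : (X3 m)⁻¹ (A1 m) = A0 m := by
    rw [hx3inv, Equiv.Perm.mul_apply, Equiv.swap_apply_of_ne_of_ne h01.symm h12,
      Equiv.swap_apply_right]
  have h32 : (X3 m)⁻¹ (A2 m) = A1 m := by
    rw [hx3inv, Equiv.Perm.mul_apply, Equiv.swap_apply_right, Equiv.swap_apply_left]
  have h3o : ∀ y : Fin (m + 9), y ≠ A0 m → y ≠ A1 m → y ≠ A2 m → (X3 m)⁻¹ y = y := by
    intro y hy0 hy1 hy2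
    rw [hx3inv, Equiv.Perm.mul_apply, Equiv.swap_apply_of_ne_of_ne hy0 hy2,
      Equiv.swap_apply_of_ne_of_ne hy0 hy1]
  have happ : ∀ y, X1 m (X2 m y) = (X3 m)⁻¹ y := by
    intro y
    show X1 m (((X1 m)⁻¹ * (X3 m)⁻¹) y) = _
    rw [Equiv.Perm.mul_apply]; exact (X1 m).apply_symm_apply _
  have hx20 : X2 m (A0 m) = A1 m := by
    have h := happ (A0 m)
    rw [h30, ← r12] at h
    exact (X1 m).injective h
  have hx21 : X2 m (A1 m) = ⟨m + 8, by omega⟩ := by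
    have h := happ (A1 m)
    rw [h31, ← rlast] at h
    exact (X1 m).injective h
  have hx22 : X2 m (A2 m) = A0 m := by
    have h := happ (A2 m)
    rw [h32, ← r01] at h
    exact (X1 m).injective h
  have hx2g : ∀ (v : ℕ) (h : v + 1 < m + 9), 2 ≤ v → X2 m ⟨v + 1, h⟩ = ⟨v, by omega⟩ := by
    intro v h h2
    have ne0 : (⟨v + 1, h⟩ : Fin (m + 9)) ≠ A0 m := by
      apply Fin.ne_of_val_ne; show v + 1 ≠ 0; omega
    have ne1 : (⟨v + 1, h⟩ : Fin (m + 9)) ≠ A1 m := by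
      apply Fin.ne_of_val_ne; show v + 1 ≠ 1; omega
    have ne2 : (⟨v + 1, h⟩ : Fin (m + 9)) ≠ A2 m := by
      apply Fin.ne_of_val_ne; show v + 1 ≠ 2; omega
    have hh := happ (⟨v + 1, h⟩ : Fin (m + 9))
    rw [h3o _ ne0 ne1 ne2] at hh
    nth_rewrite 2 [← hr1 v h] at hh
    exact (X1 m).injective hh
  have hpow : ∀ k : ℕ, 2 ≤ k → k ≤ m + 8 →
      ∀ hlt : m + 10 - k < m + 9, (X2 m ^ k) (A0 m) = ⟨m + 10 - k, hlt⟩ := by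
    intro k hk
    induction k, hk using Nat.le_induction with
    | base =>
      intro _ hlt
      have e : (X2 m ^ 2) (A0 m) = X2 m (X2 m (A0 m)) := by
        rw [pow_two, Equiv.Perm.mul_apply]
      rw [e, hx20, hx21]
      apply Fin.ext
      show m + 8 = m + 10 - 2
      omega
    | succ k hk ih =>
      intro hk1 hlt
      have e : (X2 m ^ (k + 1)) (A0 m) = X2 m ((X2 m ^ k) (A0 m)) := by
        rw [pow_succ', Equiv.Perm.mul_apply]
      rw [e, ih (by omega) (by omega)]
      have e2 : (⟨m + 10 - k, by omega⟩ : Fin (m + 9)) = ⟨(m + 9 - k) + 1, by omega⟩ := by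
        apply Fin.ext
        show m + 10 - k = (m + 9 - k) + 1
        omega
      rw [e2, hx2g (m + 9 - k) (by omega) (by omega)]
      apply Fin.ext
      show m + 9 - k = m + 10 - (k + 1)
      omega
  have hcyc : Equiv.Perm.IsCycle (X2 m) := by
    refine ⟨A0 m, ?_, ?_⟩
    · rw [hx20]; exact h01.symm
    · intro y _
      rcases y with ⟨v, hv⟩
      rcases Nat.lt_or_ge v 2 with hv2 | hv2
      · rcases Nat.lt_or_ge v 1 with hv1 | hv1
        · have hv0 : v = 0 := by omega
          subst hv0
          exact ⟨0, by rw [zpow_zero]; rfl⟩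
        · have hv1' : v = 1 := by omega
          subst hv1'
          exact ⟨1, by rw [zpow_one]; exact hx20⟩
      · refine ⟨((m + 10 - v : ℕ) : ℤ), ?_⟩
        rw [zpow_natCast, hpow (m + 10 - v) (by omega) (by omega) (by omega)]
        apply Fin.ext
        show m + 10 - (m + 10 - v) = v
        omega
  have hsupp : (X2 m).support = Finset.univ := by
    ext y
    simp only [Equiv.Perm.mem_support, Finset.mem_univ, iff_true]
    rcases y with ⟨v, hv⟩
    rcases Nat.lt_or_ge v 3 with hv3 | hv3
    · rcases Nat.lt_or_ge v 2 with hv2 | hv2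
      · rcases Nat.lt_or_ge v 1 with hv1 | hv1
        · have hv0 : v = 0 := by omega
          subst hv0
          rw [show (⟨0, hv⟩ : Fin (m + 9)) = A0 m from rfl, hx20]
          exact h01.symm
        · have hv1' : v = 1 := by omega
          subst hv1'
          rw [show (⟨1, hv⟩ : Fin (m + 9)) = A1 m from rfl, hx21]
          apply Fin.ne_of_val_ne; show m + 8 ≠ 1; omega
      · have hv2' : v = 2 := by omega
        subst hv2'
        rw [show (⟨2, hv⟩ : Fin (m + 9)) = A2 m from rfl, hx22]
        exact h02
    · obtain ⟨w, rfl⟩ : ∃ w, v = (w + 2) + 1 := ⟨v - 3, by omega⟩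
      rw [hx2g (w + 2) hv (by omega)]
      apply Fin.ne_of_val_ne; show w + 2 ≠ w + 2 + 1; omega
  have hcycleType₂ : (X2 m).cycleType = {m + 9} := by
    rw [hcyc.cycleType, hsupp, Finset.card_univ, Fintype.card_fin]
  have hcycleType₁ : (X1 m).cycleType = {m + 9} := cycleType_finRotate (n := m + 7)
  have hthree : Equiv.Perm.IsThreeCycle (X3 m) :=
    Equiv.Perm.isThreeCycle_swap_mul_swap_same h02 h01 h12.symm
  refine ⟨X1 m, X2 m, X3 m,
    by show X1 m * ((X1 m)⁻¹ * (X3 m)⁻¹) * X3 m = 1; group, ?_, hcycleType₁, hcycleType₂, hthree⟩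
  have hc1 : Equiv.Perm.IsCycle (X1 m) := isCycle_finRotate (n := m + 7)
  have hs1 : (X1 m).support = Finset.univ := support_finRotate (n := m + 7)
  have key := alt_le_closure_cycle_threeCycle hc1 hs1
    (by rw [Fintype.card_fin]; omega) (A0 m)
  have e2 : (X1 m ^ 2) (A0 m) = A2 m := by
    rw [pow_two, Equiv.Perm.mul_apply, r01, r12]
  rw [r01, e2, show Equiv.swap (A0 m) (A1 m) * Equiv.swap (A0 m) (A2 m) = (X3 m)⁻¹
    from hx3inv.symm] at key
  refine le_trans key ((Subgroup.closure_le _).2 ?_)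
  rintro g (rfl | rfl)
  · exact Subgroup.subset_closure (Set.mem_insert _ _)
  · exact inv_mem (Subgroup.subset_closure (by simp))
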